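/- The spin-Clifford relation for a consecutive spin projection and spin injection: for all x ∈ V and a ∈ Δ, ι(π(x ⊗ a)) + P((id_V ⊗ ι)(x ⊗ a)) = 2 (x ⊗ a), where P : V ⊗ V ⊗ Δ → V ⊗ Δ is the linear map u ⊗ y ⊗ b ↦ y ⊗ π(u ⊗ b) (i.e. the spin projection applied to the first tensor factor). -/

import Mathlib

noncomputable section

open TensorProduct

/-- `W = ℂ^m`. -/
abbrev SpinW (m : ℕ) : Type := Fin m → ℂ

/-- `Δ = ⋀ W`, the exterior algebra of `W`. -/
abbrev SpinDelta (m : ℕ) : Type := ExteriorAlgebra ℂ (SpinW m)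

/-- `V = W ⊕ W* ⊕ ℂe`. -/
abbrev SpinV (m : ℕ) : Type := SpinW m × Module.Dual ℂ (SpinW m) × ℂ

/-- The standard basis vector `w_i` of `W`. -/
def wB (m : ℕ) (i : Fin m) : SpinW m := Pi.single i 1

/-- The dual basis vector `w_i*` of `W*`. -/
def wD (m : ℕ) (i : Fin m) : Module.Dual ℂ (SpinW m) := LinearMap.proj i

/-- `w_i` regarded as an element of `V`. -/
def wV (m : ℕ) (i : Fin m) : SpinV m := (wB m i, 0, 0)

/-- `w_i*` regarded as an element of `V`. -/
def wsV (m : ℕ) (i : Fin m) : SpinV m := (0, wD m i, 0)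

/-- `e` regarded as an element of `V`. -/
def eV (m : ℕ) : SpinV m := (0, 0, 1)

/-- `X_v : Δ → Δ`, left exterior multiplication by `v ∈ W`. -/
def Xop (m : ℕ) (v : SpinW m) : SpinDelta m →ₗ[ℂ] SpinDelta m :=
  LinearMap.mulLeft ℂ (ExteriorAlgebra.ι ℂ v)

/-- `D_λ : Δ → Δ`, the interior product with `λ ∈ W*`;
it satisfies `D_λ(v₁ ∧ ⋯ ∧ v_k) = Σ (−1)^{i−1} λ(v_i) v₁ ∧ ⋯ ∧ v̂_i ∧ ⋯ ∧ v_k`. -/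
def Dop (m : ℕ) (lam : Module.Dual ℂ (SpinW m)) : SpinDelta m →ₗ[ℂ] SpinDelta m :=
  CliffordAlgebra.contractLeft (Q := (0 : QuadraticForm ℂ (SpinW m))) lam

/-- The grading operator `D : Δ → Δ` acting by `(−1)^k` on `⋀^k W`. -/
def Gop (m : ℕ) : SpinDelta m →ₗ[ℂ] SpinDelta m :=
  (CliffordAlgebra.involute (Q := (0 : QuadraticForm ℂ (SpinW m)))).toLinearMap

/-- Projection `V → W`. -/
def pW (m : ℕ) : SpinV m →ₗ[ℂ] SpinW m := LinearMap.fst ℂ _ _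

/-- Projection `V → W*`. -/
def pD (m : ℕ) : SpinV m →ₗ[ℂ] Module.Dual ℂ (SpinW m) :=
  (LinearMap.fst ℂ _ ℂ).comp (LinearMap.snd ℂ (SpinW m) _)

/-- Projection `V → ℂ` (the `e`-coordinate). -/
def pC (m : ℕ) : SpinV m →ₗ[ℂ] ℂ :=
  (LinearMap.snd ℂ _ ℂ).comp (LinearMap.snd ℂ (SpinW m) _)

/-- Inclusion `W → V`. -/
def iW (m : ℕ) : SpinW m →ₗ[ℂ] SpinV m :=
  LinearMap.inl ℂ (SpinW m) (Module.Dual ℂ (SpinW m) × ℂ)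

/-- Inclusion `W* → V`. -/
def iD (m : ℕ) : Module.Dual ℂ (SpinW m) →ₗ[ℂ] SpinV m :=
  (LinearMap.inr ℂ (SpinW m) _).comp (LinearMap.inl ℂ (Module.Dual ℂ (SpinW m)) ℂ)

/-- Inclusion `ℂe → V`. -/
def iC (m : ℕ) : ℂ →ₗ[ℂ] SpinV m :=
  (LinearMap.inr ℂ (SpinW m) _).comp (LinearMap.inr ℂ (Module.Dual ℂ (SpinW m)) ℂ)

/-- The symmetric bilinear form `ω` on `V`:
`ω((u,η,c),(u',η',c')) = η'(u) + η(u') + c·c'`; so `ω(w_i, w_j*) = δ_{ij}`,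
`ω(e,e) = 1`, `W` and `W*` are isotropic and `e` is orthogonal to both. -/
def omegaB (m : ℕ) : SpinV m →ₗ[ℂ] SpinV m →ₗ[ℂ] ℂ :=
  ((((LinearMap.llcomp ℂ (SpinV m) (SpinW m) ℂ).flip (pW m)).comp (pD m)).flip
  + ((LinearMap.llcomp ℂ (SpinV m) (SpinW m) ℂ).flip (pW m)).comp (pD m))
  + (pC m).smulRight (pC m)

/-- The spin projection `π : V ⊗ Δ → Δ` as a bilinear map:
`(v,λ,c) ⊗ a ↦ √2 X_v(a) + √2 D_λ(a) + c D(a)`. -/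
def piB (m : ℕ) : SpinV m →ₗ[ℂ] SpinDelta m →ₗ[ℂ] SpinDelta m :=
  (Real.sqrt 2 : ℂ) • (((LinearMap.mul ℂ (SpinDelta m)).comp ((ExteriorAlgebra.ι ℂ).comp (pW m)))
      + (CliffordAlgebra.contractLeft (Q := (0 : QuadraticForm ℂ (SpinW m)))).comp (pD m))
  + (pC m).smulRight (Gop m)

/-- The spin projection `π : V ⊗ Δ → Δ`. -/
def piMap (m : ℕ) : SpinV m ⊗[ℂ] SpinDelta m →ₗ[ℂ] SpinDelta m :=
  TensorProduct.lift (piB m)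

/-- The spin injection `ι : Δ → V ⊗ Δ`,
`a ↦ √2 Σᵢ (wᵢ ⊗ D_{wᵢ*}(a) + wᵢ* ⊗ X_{wᵢ}(a)) + e ⊗ D(a)`. -/
def iotaMap (m : ℕ) : SpinDelta m →ₗ[ℂ] SpinV m ⊗[ℂ] SpinDelta m :=
  (Real.sqrt 2 : ℂ) • (∑ i : Fin m,
      ((TensorProduct.mk ℂ (SpinV m) (SpinDelta m) (wV m i)).comp (Dop m (wD m i))
        + (TensorProduct.mk ℂ (SpinV m) (SpinDelta m) (wsV m i)).comp (Xop m (wB m i))))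
  + (TensorProduct.mk ℂ (SpinV m) (SpinDelta m) (eV m)).comp (Gop m)

/-- The invariant element `θ = Σᵢ (wᵢ ⊗ wᵢ* + wᵢ* ⊗ wᵢ) + e ⊗ e ∈ V ⊗ V`. -/
def theta (m : ℕ) : SpinV m ⊗[ℂ] SpinV m :=
  (∑ i : Fin m, (wV m i ⊗ₜ wsV m i + wsV m i ⊗ₜ wV m i)) + eV m ⊗ₜ eV m

/-- Evaluation of a dual vector at `w ∈ W`. -/
def evalW (m : ℕ) (w : SpinW m) : Module.Dual ℂ (SpinW m) →ₗ[ℂ] ℂ :=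
  Module.Dual.eval ℂ (SpinW m) w

/-- `A_{v,w} : V → V`, with `A(u) = 0`, `A(η) = η(w)v − η(v)w`, `A(e) = 0`. -/
def Amap (m : ℕ) (v w : SpinW m) : SpinV m →ₗ[ℂ] SpinV m :=
  (iW m) ∘ₗ (((evalW m w).smulRight v - (evalW m v).smulRight w) ∘ₗ pD m)

/-- `B_λ : V → V`, with `B(u) = λ(u)e`, `B(η) = 0`, `B(e) = −λ`. -/
def Bmap (m : ℕ) (lam : Module.Dual ℂ (SpinW m)) : SpinV m →ₗ[ℂ] SpinV m :=
  (iC m) ∘ₗ (lam ∘ₗ pW m) - (iD m) ∘ₗ ((pC m).smulRight lam)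

/-- `C_v : V → V`, with `C(u) = 0`, `C(η) = −η(v)e`, `C(e) = v`. -/
def Cmap (m : ℕ) (v : SpinW m) : SpinV m →ₗ[ℂ] SpinV m :=
  (iW m) ∘ₗ ((pC m).smulRight v) - (iC m) ∘ₗ ((evalW m v) ∘ₗ pD m)

/-- `H_{v,λ} : V → V`, with `H(u) = λ(u)v`, `H(η) = −η(v)λ`, `H(e) = 0`. -/
def Hmap (m : ℕ) (v : SpinW m) (lam : Module.Dual ℂ (SpinW m)) : SpinV m →ₗ[ℂ] SpinV m :=
  (iW m) ∘ₗ ((lam ∘ₗ pW m).smulRight v) - (iD m) ∘ₗ (((evalW m v) ∘ₗ pD m).smulRight lam)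

/-- `E_{λ,μ} : V → V`, with `E(u) = μ(u)λ − λ(u)μ`, `E(η) = 0`, `E(e) = 0`. -/
def Emap (m : ℕ) (lam mu : Module.Dual ℂ (SpinW m)) : SpinV m →ₗ[ℂ] SpinV m :=
  (iD m) ∘ₗ ((mu ∘ₗ pW m).smulRight lam - (lam ∘ₗ pW m).smulRight mu)

/-- The contraction `ω ⊗ id_Δ : V ⊗ (V ⊗ Δ) → Δ`, `x ⊗ y ⊗ b ↦ ω(x,y) b`. -/
def contrMap (m : ℕ) : SpinV m ⊗[ℂ] (SpinV m ⊗[ℂ] SpinDelta m) →ₗ[ℂ] SpinDelta m :=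
  (TensorProduct.lid ℂ (SpinDelta m)).toLinearMap
    ∘ₗ (TensorProduct.map (TensorProduct.lift (omegaB m)) LinearMap.id)
    ∘ₗ (TensorProduct.assoc ℂ (SpinV m) (SpinV m) (SpinDelta m)).symm.toLinearMap

/-- The swap `τ ⊗ id_Δ : V ⊗ (V ⊗ Δ) → V ⊗ (V ⊗ Δ)`, `x ⊗ y ⊗ b ↦ y ⊗ x ⊗ b`. -/
def swapMap (m : ℕ) :
    SpinV m ⊗[ℂ] (SpinV m ⊗[ℂ] SpinDelta m) →ₗ[ℂ] SpinV m ⊗[ℂ] (SpinV m ⊗[ℂ] SpinDelta m) :=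
  (TensorProduct.assoc ℂ (SpinV m) (SpinV m) (SpinDelta m)).toLinearMap
    ∘ₗ (LinearMap.rTensor (SpinDelta m) (TensorProduct.comm ℂ (SpinV m) (SpinV m)).toLinearMap)
    ∘ₗ (TensorProduct.assoc ℂ (SpinV m) (SpinV m) (SpinDelta m)).symm.toLinearMap
section SpinProofAux

open CliffordAlgebra

variable {m : ℕ}

lemma spin_involute_contract (d : Module.Dual ℂ (SpinW m)) (a : SpinDelta m) :
    involute (contractLeft (Q := (0 : QuadraticForm ℂ (SpinW m))) d a)
      = - contractLeft (Q := (0 : QuadraticForm ℂ (SpinW m))) d (involute a) := by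
  induction a using CliffordAlgebra.left_induction with
  | algebraMap r => simp
  | add x y hx hy => rw [map_add, map_add, map_add, hx, hy, map_add, neg_add]
  | ι_mul xc vv hx =>
      simp only [map_mul, involute_ι, neg_mul, map_neg, contractLeft_ι_mul, map_sub,
        map_smul, hx, mul_neg, neg_neg, neg_sub, sub_neg_eq_add]

lemma spin_piMap_tmul (y : SpinV m) (b : SpinDelta m) :
    piMap m (y ⊗ₜ b) = (Real.sqrt 2 : ℂ) • (ExteriorAlgebra.ι ℂ y.1 * b)
      + (Real.sqrt 2 : ℂ) • (contractLeft (Q := (0 : QuadraticForm ℂ (SpinW m))) y.2.1 b)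
      + y.2.2 • involute b := by
  simp [piMap, piB, pW, pD, pC, Gop, smul_add]

lemma spin_iotaMap_apply (b : SpinDelta m) :
    iotaMap m b = (Real.sqrt 2 : ℂ) • (∑ i : Fin m,
        (wV m i ⊗ₜ (contractLeft (Q := (0 : QuadraticForm ℂ (SpinW m))) (wD m i) b)
          + wsV m i ⊗ₜ (ExteriorAlgebra.ι ℂ (wB m i) * b)))
      + eV m ⊗ₜ involute b := by
  simp [iotaMap, Dop, Xop, Gop, LinearMap.sum_apply]
  norm_cast

lemma spin_swapMap_tmul (y z : SpinV m) (b : SpinDelta m) :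
    swapMap m (y ⊗ₜ (z ⊗ₜ b)) = z ⊗ₜ (y ⊗ₜ b) := by
  simp [swapMap]

end SpinProofAux

set_option maxHeartbeats 2000000

/-- The spin-Clifford relation for a consecutive spin projection and spin injection:
for all `x ∈ V` and `a ∈ Δ`,
`ι(π(x ⊗ a)) + P((id_V ⊗ ι)(x ⊗ a)) = 2 (x ⊗ a)`, where
`P : V ⊗ V ⊗ Δ → V ⊗ Δ` is `u ⊗ y ⊗ b ↦ y ⊗ π(u ⊗ b)` (the spin projection applied to
the first tensor factor); here `P = (id_V ⊗ π) ∘ (τ ⊗ id_Δ)`. -/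
theorem spin_clifford_relation_projection_injection (m : ℕ) (hm : 1 ≤ m)
    (x : SpinV m) (a : SpinDelta m) :
    iotaMap m (piMap m (x ⊗ₜ a))
        + LinearMap.lTensor (SpinV m) (piMap m) (swapMap m (x ⊗ₜ (iotaMap m a)))
      = (2 : ℂ) • (x ⊗ₜ a) := by
  obtain ⟨v, lam, c⟩ := x
  set s : ℂ := ((Real.sqrt 2 : ℝ) : ℂ) with hs
  have hss : s * s = 2 := by
    rw [hs, ← Complex.ofReal_mul, Real.mul_self_sqrt (by norm_num : (0:ℝ) ≤ 2)]
    norm_num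
  have h1 : ∀ d : Module.Dual ℂ (SpinW m),
      CliffordAlgebra.contractLeft (Q := (0 : QuadraticForm ℂ (SpinW m))) d
          (piMap m ((v, lam, c) ⊗ₜ a))
        + piMap m ((v, lam, c) ⊗ₜ
            (CliffordAlgebra.contractLeft (Q := (0 : QuadraticForm ℂ (SpinW m))) d a))
      = (s * d v) • a := by
    intro d
    rw [spin_piMap_tmul, spin_piMap_tmul]
    simp only [map_add, map_smul, CliffordAlgebra.contractLeft_ι_mul]
    rw [CliffordAlgebra.contractLeft_comm, spin_involute_contract]
    rw [show (ExteriorAlgebra.ι ℂ : SpinW m →ₗ[ℂ] SpinDelta m)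
      = CliffordAlgebra.ι (0 : QuadraticForm ℂ (SpinW m)) from rfl]
    module
  have h2 : ∀ w : SpinW m,
      ExteriorAlgebra.ι ℂ w * (piMap m ((v, lam, c) ⊗ₜ a))
        + piMap m ((v, lam, c) ⊗ₜ (ExteriorAlgebra.ι ℂ w * a))
      = (s * lam w) • a := by
    intro w
    rw [spin_piMap_tmul, spin_piMap_tmul]
    have hanti : ExteriorAlgebra.ι ℂ w * (ExteriorAlgebra.ι ℂ v * a)
        = -(ExteriorAlgebra.ι ℂ v * (ExteriorAlgebra.ι ℂ w * a)) := by
      rw [← mul_assoc, ← mul_assoc,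
        CliffordAlgebra.ι_mul_ι_comm_of_isOrtho (by simp [QuadraticMap.IsOrtho]), neg_mul]
    simp only [mul_add, mul_smul_comm, CliffordAlgebra.contractLeft_ι_mul, map_mul,
      CliffordAlgebra.involute_ι, neg_mul, mul_neg, hanti]
    rw [show (CliffordAlgebra.ι (0 : QuadraticForm ℂ (SpinW m)) : SpinW m →ₗ[ℂ] SpinDelta m)
      = ExteriorAlgebra.ι ℂ from rfl]
    module
  have h3 : CliffordAlgebra.involute (piMap m ((v, lam, c) ⊗ₜ a))
        + piMap m ((v, lam, c) ⊗ₜ (CliffordAlgebra.involute a))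
      = (2 * c) • a := by
    rw [spin_piMap_tmul, spin_piMap_tmul]
    simp only [map_add, map_smul, map_mul, CliffordAlgebra.involute_ι, neg_mul,
      spin_involute_contract, CliffordAlgebra.involute_involute]
    rw [show (CliffordAlgebra.ι (0 : QuadraticForm ℂ (SpinW m)) : SpinW m →ₗ[ℂ] SpinDelta m)
      = ExteriorAlgebra.ι ℂ from rfl]
    module
  have hsum1 : ∑ i : Fin m, (2 * v i) • wB m i = (2:ℂ) • v := by
    funext j
    simp [wB, Pi.single_apply, Finset.sum_ite_eq', mul_comm]
  have hsum2 : ∑ i : Fin m, (2 * lam (wB m i)) • wD m i = (2:ℂ) • lam := by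
    refine LinearMap.ext fun u => ?_
    have hu : u = ∑ i : Fin m, u i • wB m i := by
      funext j
      simp [wB, Pi.single_apply, Finset.sum_ite_eq', mul_comm]
    simp only [LinearMap.sum_apply, LinearMap.smul_apply, wD, LinearMap.proj_apply,
      smul_eq_mul]
    conv_rhs => rw [hu]
    simp only [map_sum, map_smul, smul_eq_mul, Finset.mul_sum]
    refine Finset.sum_congr rfl fun i _ => by ring
  have hvec : (∑ i : Fin m, ((2 * v i) • wV m i + (2 * lam (wB m i)) • wsV m i))
        + (2 * c) • eV m = (2:ℂ) • ((v, lam, c) : SpinV m) := by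
    simp only [wV, wsV, eV, Prod.smul_mk, Prod.mk_add_mk, Prod.ext_iff, Prod.fst_sum,
      Prod.snd_sum, smul_zero, add_zero, zero_add, Prod.fst_add, Prod.snd_add]
    refine ⟨?_, ?_, ?_⟩
    · simpa using hsum1
    · simpa using hsum2
    · simp [mul_comm]
  have hs2 : ∀ r : ℂ, s * (s * r) = 2 * r := fun r => by rw [← mul_assoc, hss]
  have hB : LinearMap.lTensor (SpinV m) (piMap m)
        (swapMap m (((v, lam, c) : SpinV m) ⊗ₜ (iotaMap m a)))
      = s • (∑ i : Fin m,
            (wV m i ⊗ₜ (piMap m ((v, lam, c) ⊗ₜ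
                (CliffordAlgebra.contractLeft (Q := (0 : QuadraticForm ℂ (SpinW m)))
                  (wD m i) a)))
              + wsV m i ⊗ₜ (piMap m ((v, lam, c) ⊗ₜ (ExteriorAlgebra.ι ℂ (wB m i) * a)))))
        + eV m ⊗ₜ (piMap m ((v, lam, c) ⊗ₜ (CliffordAlgebra.involute a))) := by
    rw [spin_iotaMap_apply a]
    simp only [tmul_add, tmul_smul, tmul_sum, map_add, map_smul, map_sum,
      spin_swapMap_tmul, LinearMap.lTensor_tmul]
    rw [hs]
  rw [spin_iotaMap_apply (piMap m (((v, lam, c) : SpinV m) ⊗ₜ a)), hB]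
  have hterm : ∀ i : Fin m,
      ((wV m i ⊗ₜ (CliffordAlgebra.contractLeft (Q := (0 : QuadraticForm ℂ (SpinW m)))
            (wD m i) (piMap m (((v, lam, c) : SpinV m) ⊗ₜ a)))
          + wsV m i ⊗ₜ (ExteriorAlgebra.ι ℂ (wB m i) * piMap m (((v, lam, c) : SpinV m) ⊗ₜ a)))
        + (wV m i ⊗ₜ (piMap m ((v, lam, c) ⊗ₜ
              (CliffordAlgebra.contractLeft (Q := (0 : QuadraticForm ℂ (SpinW m)))
                (wD m i) a)))
            + wsV m i ⊗ₜ (piMap m ((v, lam, c) ⊗ₜ (ExteriorAlgebra.ι ℂ (wB m i) * a)))))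
      = wV m i ⊗ₜ[ℂ] ((s * wD m i v) • a) + wsV m i ⊗ₜ[ℂ] ((s * lam (wB m i)) • a) := by
    intro i
    have e1 := h1 (wD m i)
    calc _ = wV m i ⊗ₜ[ℂ] (CliffordAlgebra.contractLeft
              (Q := (0 : QuadraticForm ℂ (SpinW m))) (wD m i)
              (piMap m (((v, lam, c) : SpinV m) ⊗ₜ a))
            + piMap m ((v, lam, c) ⊗ₜ
              (CliffordAlgebra.contractLeft (Q := (0 : QuadraticForm ℂ (SpinW m)))
                (wD m i) a)))
          + wsV m i ⊗ₜ[ℂ] (ExteriorAlgebra.ι ℂ (wB m i)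
              * piMap m (((v, lam, c) : SpinV m) ⊗ₜ a)
            + piMap m ((v, lam, c) ⊗ₜ (ExteriorAlgebra.ι ℂ (wB m i) * a))) := by
          simp only [tmul_add]
          abel
      _ = _ := by rw [e1, h2 (wB m i)]
  have hsums : (∑ i : Fin m,
        (wV m i ⊗ₜ (CliffordAlgebra.contractLeft (Q := (0 : QuadraticForm ℂ (SpinW m)))
            (wD m i) (piMap m (((v, lam, c) : SpinV m) ⊗ₜ a)))
          + wsV m i ⊗ₜ (ExteriorAlgebra.ι ℂ (wB m i)
              * piMap m (((v, lam, c) : SpinV m) ⊗ₜ a))))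
      + (∑ i : Fin m,
        (wV m i ⊗ₜ (piMap m ((v, lam, c) ⊗ₜ
            (CliffordAlgebra.contractLeft (Q := (0 : QuadraticForm ℂ (SpinW m)))
              (wD m i) a)))
          + wsV m i ⊗ₜ (piMap m ((v, lam, c) ⊗ₜ (ExteriorAlgebra.ι ℂ (wB m i) * a)))))
      = ∑ i : Fin m,
        (wV m i ⊗ₜ[ℂ] ((s * wD m i v) • a) + wsV m i ⊗ₜ[ℂ] ((s * lam (wB m i)) • a)) := by
    rw [← Finset.sum_add_distrib]
    exact Finset.sum_congr rfl fun i _ => hterm i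
  have hstep : s • (∑ i : Fin m,
        (wV m i ⊗ₜ (CliffordAlgebra.contractLeft (Q := (0 : QuadraticForm ℂ (SpinW m)))
            (wD m i) (piMap m (((v, lam, c) : SpinV m) ⊗ₜ a)))
          + wsV m i ⊗ₜ (ExteriorAlgebra.ι ℂ (wB m i)
              * piMap m (((v, lam, c) : SpinV m) ⊗ₜ a))))
      + eV m ⊗ₜ (CliffordAlgebra.involute (piMap m (((v, lam, c) : SpinV m) ⊗ₜ a)))
      + (s • (∑ i : Fin m,
          (wV m i ⊗ₜ (piMap m ((v, lam, c) ⊗ₜ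
              (CliffordAlgebra.contractLeft (Q := (0 : QuadraticForm ℂ (SpinW m)))
                (wD m i) a)))
            + wsV m i ⊗ₜ (piMap m ((v, lam, c) ⊗ₜ (ExteriorAlgebra.ι ℂ (wB m i) * a)))))
        + eV m ⊗ₜ (piMap m ((v, lam, c) ⊗ₜ (CliffordAlgebra.involute a))))
      = s • (∑ i : Fin m,
          (wV m i ⊗ₜ[ℂ] ((s * wD m i v) • a) + wsV m i ⊗ₜ[ℂ] ((s * lam (wB m i)) • a)))
        + eV m ⊗ₜ[ℂ] ((2 * c) • a) := by
    rw [← hsums, ← h3, tmul_add, smul_add]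
    abel
  simp only [← hs]
  rw [hstep]
  simp only [wD, LinearMap.proj_apply]
  simp only [tmul_smul, smul_smul, hs2, Finset.smul_sum, smul_add]
  simp only [smul_tmul', ← add_tmul]
  rw [← TensorProduct.sum_tmul, ← add_tmul, hvec, ← smul_tmul']
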